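/- Under LATE monotonicity with ordering D_{z_1} ≤ D_{z_2} ≤ ⋯ ≤ D_{z_L} almost surely, independence of Z from (Y0, Y1, D_{z_1},...,D_{z_L}), 0 < p(z_ℓ) < 1 for all ℓ, p_1 := P[AT] > 0 and p_ℓ := P[(z_{ℓ−1},z_ℓ)-C] > 0 for ℓ = 2,...,L, suppose L ≥ 2 and the nonnegative weight vectors w ≠ w̃ (each summing to 1) satisfy w_1 + p_1 Σ_{ℓ=2}^L w_ℓ/p(z_ℓ) = w̃_1 + p_1 Σ_{ℓ=2}^L w̃_ℓ/p(z_ℓ). Then for each d ∈ {0,1}, the inequality Σ_{ℓ=1}^L w_ℓ P[Y_d ≤ y | D_{z_ℓ}=1] ≤ Σ_{ℓ=1}^L w̃_ℓ P[Y_d ≤ y | D_{z_ℓ}=1] for all y can be expressed as Σ_{ℓ=2}^L ω_ℓ P[Y_d ≤ y | (z_{ℓ−1},z_ℓ)-C] ≤ Σ_{ℓ=2}^L ω̃_ℓ P[Y_d ≤ y | (z_{ℓ−1},z_ℓ)-C] for all y, for some nonnegative weights ω_ℓ and ω̃_ℓ, ℓ = 2,...,L. -/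

import Mathlib

open MeasureTheory ProbabilityTheory Filter Set

/-- Probability of an event. -/
noncomputable def pr {Ω : Type*} [MeasurableSpace Ω] (μ : Measure Ω) (s : Set Ω) : ℝ :=
  (μ s).toReal

/-- Conditional probability `P[s | A]`. -/
noncomputable def cpr {Ω : Type*} [MeasurableSpace Ω] (μ : Measure Ω) (s A : Set Ω) : ℝ :=
  pr μ (s ∩ A) / pr μ A

/-- Lemma 1(ii): if the weights `w ≠ w̃` satisfy the balance condition removing
the always-takers, the mixture FOSD inequality can be expressed purely in terms of
the complier groups. -/
theorem mixture_inequality_reduces_to_compliers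
    {Ω : Type*} [MeasurableSpace Ω] (μ : Measure Ω) [IsProbabilityMeasure μ]
    (L : ℕ) [NeZero L] (hL : 2 ≤ L)
    (Y0 Y1 Y : Ω → ℝ) (Dz : Fin L → Ω → ℕ) (Z : Ω → Fin L) (D : Ω → ℕ)
    (hmY0 : Measurable Y0) (hmY1 : Measurable Y1) (hmZ : Measurable Z)
    (hmDz : ∀ ℓ, Measurable (Dz ℓ))
    (hDz01 : ∀ ℓ ω, Dz ℓ ω = 0 ∨ Dz ℓ ω = 1)
    (hD : ∀ ω, D ω = Dz (Z ω) ω)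
    (hYobs : ∀ ω, Y ω = if D ω = 1 then Y1 ω else Y0 ω)
    -- LATE monotonicity, labeled so that D_{z_1} ≤ D_{z_2} ≤ ⋯ ≤ D_{z_L} a.s.
    (hmono : ∀ ℓ ℓ' : Fin L, ℓ ≤ ℓ' → ∀ᵐ ω ∂μ, Dz ℓ ω ≤ Dz ℓ' ω)
    -- instrument exogeneity: Z ⊥ (Y0, Y1, D_{z_1}, …, D_{z_L})
    (hindep : IndepFun Z (fun ω => (Y0 ω, Y1 ω, fun ℓ => Dz ℓ ω)) μ)
    (hZpos : ∀ ℓ : Fin L, 0 < pr μ {ω | Z ω = ℓ})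
    (p : Fin L → ℝ) (hp : ∀ ℓ, p ℓ = cpr μ {ω | D ω = 1} {ω | Z ω = ℓ})
    (hp01 : ∀ ℓ, 0 < p ℓ ∧ p ℓ < 1)
    -- compliance groups: C 0 = always-takers, C ℓ = (z_{ℓ-1}, z_ℓ)-compliers for ℓ ≠ 0
    (C : Fin L → Set Ω)
    (hC0 : C 0 = {ω | Dz 0 ω = 1})
    (hCl : ∀ ℓ : Fin L, ℓ ≠ 0 → C ℓ = {ω | Dz (ℓ - 1) ω = 0 ∧ Dz ℓ ω = 1})
    (hCpos : ∀ ℓ, 0 < pr μ (C ℓ))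
    -- the weights
    (w wt : Fin L → ℝ) (hw : ∀ ℓ, 0 ≤ w ℓ) (hwt : ∀ ℓ, 0 ≤ wt ℓ)
    (hw1 : (∑ ℓ, w ℓ) = 1) (hwt1 : (∑ ℓ, wt ℓ) = 1) (hwne : w ≠ wt)
    -- balance condition: w₁ + p₁ Σ_{ℓ≥2} w_ℓ / p(z_ℓ) = w̃₁ + p₁ Σ_{ℓ≥2} w̃_ℓ / p(z_ℓ)
    (hbal : w 0 + pr μ (C 0) * (∑ ℓ ∈ Finset.univ.erase (0 : Fin L), w ℓ / p ℓ)
      = wt 0 + pr μ (C 0) * (∑ ℓ ∈ Finset.univ.erase (0 : Fin L), wt ℓ / p ℓ)) :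
    ∀ Yd : Ω → ℝ, (Yd = Y0 ∨ Yd = Y1) →
      ∃ om omt : Fin L → ℝ, (∀ ℓ, 0 ≤ om ℓ) ∧ (∀ ℓ, 0 ≤ omt ℓ) ∧
        ((∀ y : ℝ, (∑ ℓ, w ℓ * cpr μ {ω | Yd ω ≤ y} {ω | Dz ℓ ω = 1})
            ≤ ∑ ℓ, wt ℓ * cpr μ {ω | Yd ω ≤ y} {ω | Dz ℓ ω = 1}) ↔
          (∀ y : ℝ, (∑ ℓ ∈ Finset.univ.erase (0 : Fin L), om ℓ * cpr μ {ω | Yd ω ≤ y} (C ℓ))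
            ≤ ∑ ℓ ∈ Finset.univ.erase (0 : Fin L), omt ℓ * cpr μ {ω | Yd ω ≤ y} (C ℓ))) := by
  obtain ⟨M, rfl⟩ : ∃ M, L = M + 1 := ⟨L - 1, by omega⟩
  intro Yd hYd
  have hmYd : Measurable Yd := by rcases hYd with h | h <;> subst h <;> assumption
  have hmA : ∀ ℓ, MeasurableSet {ω | Dz ℓ ω = 1} := fun ℓ => (hmDz ℓ) (measurableSet_singleton 1)
  have hmC : ∀ k, MeasurableSet (C k) := by
    intro k
    by_cases hk : k = 0
    · rw [hk, hC0]; exact hmA 0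
    · rw [hCl k hk, Set.setOf_and]
      exact ((hmDz (k - 1)) (measurableSet_singleton 0)).inter (hmA k)
  have pr_union : ∀ s t : Set Ω, MeasurableSet t → Disjoint s t →
      pr μ (s ∪ t) = pr μ s + pr μ t := by
    intro s t ht hd
    unfold pr
    rw [measure_union hd ht, ENNReal.toReal_add (measure_ne_top μ s) (measure_ne_top μ t)]
  -- Step A : p ℓ = P[Dz ℓ = 1]
  have hpA : ∀ ℓ, p ℓ = pr μ {ω | Dz ℓ ω = 1} := by
    intro ℓ
    have hmT : MeasurableSet {x : ℝ × ℝ × (Fin (M + 1) → ℕ) | x.2.2 ℓ = 1} := by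
      have : Measurable fun x : ℝ × ℝ × (Fin (M + 1) → ℕ) => x.2.2 ℓ :=
        (measurable_pi_apply ℓ).comp (measurable_snd.comp measurable_snd)
      exact this (measurableSet_singleton 1)
    have h1 : {ω | D ω = 1} ∩ {ω | Z ω = ℓ}
        = Z ⁻¹' {ℓ} ∩ (fun ω => (Y0 ω, Y1 ω, fun j => Dz j ω)) ⁻¹'
            {x : ℝ × ℝ × (Fin (M + 1) → ℕ) | x.2.2 ℓ = 1} := by
      ext ω
      simp only [Set.mem_inter_iff, Set.mem_setOf_eq, Set.mem_preimage, Set.mem_singleton_iff]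
      constructor
      · rintro ⟨hd1, hz⟩
        rw [hD ω, hz] at hd1
        exact ⟨hz, hd1⟩
      · rintro ⟨hz, hd1⟩
        exact ⟨by rw [hD ω, hz]; exact hd1, hz⟩
    have h2 : μ ({ω | D ω = 1} ∩ {ω | Z ω = ℓ}) = μ {ω | Z ω = ℓ} * μ {ω | Dz ℓ ω = 1} := by
      rw [h1]
      exact hindep.measure_inter_preimage_eq_mul _ _ (measurableSet_singleton ℓ) hmT
    rw [hp ℓ]
    unfold cpr pr
    rw [h2, ENNReal.toReal_mul]
    rw [mul_comm]
    exact mul_div_cancel_right₀ _ (hZpos ℓ).ne'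
  -- Step B : decomposition of {Dz ℓ = 1} into complier groups
  have key : ∀ S : Set Ω, MeasurableSet S → ∀ ℓ : Fin (M + 1),
      pr μ (S ∩ {ω | Dz ℓ ω = 1}) = ∑ k ∈ Finset.Iic ℓ, pr μ (S ∩ C k) := by
    intro S hS
    have step : ∀ ℓ : Fin (M + 1), ℓ ≠ 0 →
        pr μ (S ∩ {ω | Dz ℓ ω = 1})
          = pr μ (S ∩ {ω | Dz (ℓ - 1) ω = 1}) + pr μ (S ∩ C ℓ) := by
      intro ℓ hℓ
      have hle : (ℓ - 1 : Fin (M + 1)) ≤ ℓ := by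
        rw [Fin.le_def, Fin.coe_sub_one, if_neg hℓ]
        omega
      have hae := hmono (ℓ - 1) ℓ hle
      have hset : (S ∩ {ω | Dz ℓ ω = 1} : Set Ω)
          =ᵐ[μ] ((S ∩ {ω | Dz (ℓ - 1) ω = 1}) ∪ (S ∩ C ℓ) : Set Ω) := by
        rw [Filter.eventuallyEq_set]
        filter_upwards [hae] with ω hω
        simp only [Set.mem_union, Set.mem_inter_iff, Set.mem_setOf_eq, hCl ℓ hℓ]
        constructor
        · rintro ⟨hs, h1⟩
          rcases hDz01 (ℓ - 1) ω with h0 | h0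
          · exact Or.inr ⟨hs, h0, h1⟩
          · exact Or.inl ⟨hs, h0⟩
        · rintro (⟨hs, h1⟩ | ⟨hs, _, h1⟩)
          · refine ⟨hs, ?_⟩
            rcases hDz01 ℓ ω with h0 | h0
            · omega
            · exact h0
          · exact ⟨hs, h1⟩
      have hdisj : Disjoint (S ∩ {ω | Dz (ℓ - 1) ω = 1}) (S ∩ C ℓ) := by
        rw [Set.disjoint_left]
        rintro ω ⟨_, h1⟩ ⟨_, h2⟩
        rw [hCl ℓ hℓ] at h2
        have h1' : Dz (ℓ - 1) ω = 1 := h1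
        have h2' : Dz (ℓ - 1) ω = 0 := h2.1
        omega
      calc pr μ (S ∩ {ω | Dz ℓ ω = 1})
          = pr μ ((S ∩ {ω | Dz (ℓ - 1) ω = 1}) ∪ (S ∩ C ℓ)) := by
            unfold pr; rw [measure_congr hset]
        _ = _ := pr_union _ _ (hS.inter (hmC ℓ)) hdisj
    have main : ∀ n : ℕ, ∀ ℓ : Fin (M + 1), ℓ.val = n →
        pr μ (S ∩ {ω | Dz ℓ ω = 1}) = ∑ k ∈ Finset.Iic ℓ, pr μ (S ∩ C k) := by
      intro n
      induction n with
      | zero =>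
        intro ℓ hℓ
        have h0 : ℓ = 0 := Fin.ext hℓ
        subst h0
        have hI : Finset.Iic (0 : Fin (M + 1)) = {0} := by
          ext k
          simp [Finset.mem_Iic, Fin.le_zero_iff]
        rw [hI, Finset.sum_singleton, hC0]
      | succ n ih =>
        intro ℓ hℓ
        have hℓ0 : ℓ ≠ 0 := by
          intro h
          rw [h] at hℓ
          simp at hℓ
        have hsub : (ℓ - 1 : Fin (M + 1)).val = n := by
          rw [Fin.coe_sub_one, if_neg hℓ0, hℓ]
          omega
        have hIic : Finset.Iic ℓ = insert ℓ (Finset.Iic (ℓ - 1)) := by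
          ext k
          simp only [Finset.mem_Iic, Finset.mem_insert, Fin.le_def, Fin.ext_iff, hsub, hℓ]
          omega
        have hnot : ℓ ∉ Finset.Iic (ℓ - 1) := by
          simp only [Finset.mem_Iic, Fin.le_def, hsub, hℓ]
          omega
        rw [hIic, Finset.sum_insert hnot, step ℓ hℓ0, ih (ℓ - 1) hsub]
        ring
    exact fun ℓ => main ℓ.val ℓ rfl
  -- Step C : swap of summation
  have swap : ∀ f : Fin (M + 1) → Fin (M + 1) → ℝ,
      (∑ ℓ, ∑ k ∈ Finset.Iic ℓ, f ℓ k) = ∑ k, ∑ ℓ ∈ Finset.Ici k, f ℓ k := by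
    intro f
    have hIic : ∀ ℓ : Fin (M + 1), Finset.Iic ℓ = Finset.univ.filter (· ≤ ℓ) := by
      intro ℓ; ext k; simp
    have hIci : ∀ k : Fin (M + 1), Finset.Ici k = Finset.univ.filter (k ≤ ·) := by
      intro k; ext ℓ; simp
    calc (∑ ℓ, ∑ k ∈ Finset.Iic ℓ, f ℓ k)
        = ∑ ℓ, ∑ k, if k ≤ ℓ then f ℓ k else 0 := by
          simp_rw [hIic, Finset.sum_filter]
      _ = ∑ k, ∑ ℓ, if k ≤ ℓ then f ℓ k else 0 := Finset.sum_comm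
      _ = ∑ k, ∑ ℓ ∈ Finset.Ici k, f ℓ k := by
          simp_rw [hIci, Finset.sum_filter]
  have expand : ∀ (v : Fin (M + 1) → ℝ) (S : Set Ω), MeasurableSet S →
      (∑ ℓ, v ℓ * cpr μ S {ω | Dz ℓ ω = 1})
        = ∑ k, (∑ ℓ ∈ Finset.Ici k, v ℓ / p ℓ) * pr μ (S ∩ C k) := by
    intro v S hS
    have h1 : ∀ ℓ, v ℓ * cpr μ S {ω | Dz ℓ ω = 1}
        = ∑ k ∈ Finset.Iic ℓ, (v ℓ / p ℓ) * pr μ (S ∩ C k) := by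
      intro ℓ
      rw [← Finset.mul_sum]
      unfold cpr
      rw [key S hS ℓ, ← hpA ℓ]
      ring
    calc (∑ ℓ, v ℓ * cpr μ S {ω | Dz ℓ ω = 1})
        = ∑ ℓ, ∑ k ∈ Finset.Iic ℓ, (v ℓ / p ℓ) * pr μ (S ∩ C k) :=
          Finset.sum_congr rfl fun ℓ _ => h1 ℓ
      _ = ∑ k, ∑ ℓ ∈ Finset.Ici k, (v ℓ / p ℓ) * pr μ (S ∩ C k) :=
          swap _
      _ = ∑ k, (∑ ℓ ∈ Finset.Ici k, v ℓ / p ℓ) * pr μ (S ∩ C k) :=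
          Finset.sum_congr rfl fun k _ => (Finset.sum_mul _ _ _).symm
  have homF : ∀ (c : ℝ) (S : Set Ω) (k : Fin (M + 1)),
      (pr μ (C k) * c) * cpr μ S (C k) = c * pr μ (S ∩ C k) := by
    intro c S k
    have h := (hCpos k).ne'
    unfold cpr
    field_simp
  have eqsum : ∀ (v : Fin (M + 1) → ℝ) (y : ℝ),
      (∑ ℓ, v ℓ * cpr μ {ω | Yd ω ≤ y} {ω | Dz ℓ ω = 1})
        = ∑ k, (pr μ (C k) * ∑ ℓ ∈ Finset.Ici k, v ℓ / p ℓ)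
            * cpr μ {ω | Yd ω ≤ y} (C k) := by
    intro v y
    rw [expand v {ω | Yd ω ≤ y} (hmYd measurableSet_Iic)]
    exact Finset.sum_congr rfl fun k _ => (homF _ _ k).symm
  -- the balance condition gives equal 0-th coefficients
  have hsplit : ∀ v : Fin (M + 1) → ℝ,
      (∑ ℓ ∈ Finset.Ici (0 : Fin (M + 1)), v ℓ / p ℓ)
        = v 0 / p 0 + ∑ ℓ ∈ Finset.univ.erase 0, v ℓ / p ℓ := by
    intro v
    have hIci0 : Finset.Ici (0 : Fin (M + 1)) = Finset.univ := by
      ext k; simp [Fin.zero_le]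
    rw [hIci0, ← Finset.add_sum_erase _ _ (Finset.mem_univ 0)]
  have hp0C : p 0 = pr μ (C 0) := by rw [hpA 0, hC0]
  have hp0 : p 0 ≠ 0 := (hp01 0).1.ne'
  have hom0 : pr μ (C 0) * (∑ ℓ ∈ Finset.Ici (0 : Fin (M + 1)), w ℓ / p ℓ)
      = pr μ (C 0) * (∑ ℓ ∈ Finset.Ici (0 : Fin (M + 1)), wt ℓ / p ℓ) := by
    rw [hsplit w, hsplit wt, mul_add, mul_add, ← hp0C,
      mul_div_cancel₀ _ hp0, mul_div_cancel₀ _ hp0, hp0C]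
    exact hbal
  refine ⟨fun k => pr μ (C k) * ∑ ℓ ∈ Finset.Ici k, w ℓ / p ℓ,
      fun k => pr μ (C k) * ∑ ℓ ∈ Finset.Ici k, wt ℓ / p ℓ, ?_, ?_, ?_⟩
  · intro k
    exact mul_nonneg ENNReal.toReal_nonneg
      (Finset.sum_nonneg fun ℓ _ => div_nonneg (hw ℓ) (hp01 ℓ).1.le)
  · intro k
    exact mul_nonneg ENNReal.toReal_nonneg
      (Finset.sum_nonneg fun ℓ _ => div_nonneg (hwt ℓ) (hp01 ℓ).1.le)
  constructor
  · intro h y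
    have hy := h y
    rw [eqsum w y, eqsum wt y,
      ← Finset.add_sum_erase _ _ (Finset.mem_univ (0 : Fin (M + 1))),
      ← Finset.add_sum_erase _ _ (Finset.mem_univ (0 : Fin (M + 1))), hom0] at hy
    exact le_of_add_le_add_left hy
  · intro h y
    rw [eqsum w y, eqsum wt y,
      ← Finset.add_sum_erase _ _ (Finset.mem_univ (0 : Fin (M + 1))),
      ← Finset.add_sum_erase _ _ (Finset.mem_univ (0 : Fin (M + 1))), hom0]
    exact add_le_add_right (h y) _
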